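/- arXiv:2104.04419 — 2 statements merged into one kernel-verified Lean document; each statement's English description precedes it below -/
import Mathlib

section
/- For every q > 1 and all positive definite density matrices ρ and σ on a finite-dimensional complex Hilbert space, the q-geometric Rényi divergence satisfies D̂_q(ρ‖σ) ≤ ‖σ⁻¹ρ − 1‖, where ‖·‖ is the operator norm and 1 is the identity operator. -/
open scoped Kronecker ComplexOrder

namespace QIT

variable {n : Type*} [Fintype n] [DecidableEq n]

/-- Operator norm of a matrix, i.e. the norm of the induced operator on Euclidean space. -/
noncomputable def opNorm (M : Matrix n n ℂ) : ℝ :=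
  ‖Matrix.toEuclideanCLM (𝕜 := ℂ) M‖

/-- Functional calculus for Hermitian matrices (junk value `0` on non-Hermitian inputs). -/
noncomputable def matCfc (f : ℝ → ℝ) (M : Matrix n n ℂ) : Matrix n n ℂ :=
  if hM : M.IsHermitian then
    (hM.eigenvectorUnitary : Matrix n n ℂ) *
      Matrix.diagonal (fun i => (f (hM.eigenvalues i) : ℂ)) *
      star (hM.eigenvectorUnitary : Matrix n n ℂ)
  else 0

/-- Matrix logarithm via the functional calculus. -/
noncomputable def mlog (M : Matrix n n ℂ) : Matrix n n ℂ := matCfc Real.log M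

/-- Real powers of a matrix via the functional calculus. -/
noncomputable def mpow (M : Matrix n n ℂ) (q : ℝ) : Matrix n n ℂ :=
  matCfc (fun x => x ^ q) M

/-- Umegaki relative entropy `D(ρ‖σ) = Tr[ρ (log ρ - log σ)]`. -/
noncomputable def relEntropy (ρ σ : Matrix n n ℂ) : ℝ :=
  (Matrix.trace (ρ * (mlog ρ - mlog σ))).re

/-- Belavkin-Staszewski relative entropy `D̂(ρ‖σ) = Tr[ρ log (ρ^{1/2} σ⁻¹ ρ^{1/2})]`. -/
noncomputable def bsEntropy (ρ σ : Matrix n n ℂ) : ℝ :=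
  (Matrix.trace (ρ * mlog (mpow ρ (1/2) * σ⁻¹ * mpow ρ (1/2)))).re

/-- `q`-geometric Rényi divergence
`D̂_q(ρ‖σ) = (q-1)⁻¹ log Tr[σ^{1/2} (σ^{-1/2} ρ σ^{-1/2})^q σ^{1/2}]`. -/
noncomputable def geomRenyi (q : ℝ) (ρ σ : Matrix n n ℂ) : ℝ :=
  (q - 1)⁻¹ *
    Real.log
      (Matrix.trace
        (mpow σ (1/2) * mpow (mpow σ (-(1/2)) * ρ * mpow σ (-(1/2))) q * mpow σ (1/2))).re

/-- Trace norm `‖M‖₁ = Tr ((M† M)^{1/2})`. -/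
noncomputable def traceNorm (M : Matrix n n ℂ) : ℝ :=
  (((Matrix.isHermitian_conjTranspose_mul_self M).eigenvectorUnitary : Matrix n n ℂ) *
      Matrix.diagonal (((↑) : ℝ → ℂ) ∘ (√·) ∘ (Matrix.isHermitian_conjTranspose_mul_self M).eigenvalues) *
      (star (Matrix.isHermitian_conjTranspose_mul_self M).eigenvectorUnitary :
        Matrix n n ℂ)).trace.re

/-- Partial trace over the second tensor factor. -/
noncomputable def ptraceRight {a c : Type*} [Fintype a] [Fintype c]
    (M : Matrix (a × c) (a × c) ℂ) : Matrix a a ℂ :=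
  fun i j => ∑ k, M (i, k) (j, k)

/-- Partial trace over the first tensor factor. -/
noncomputable def ptraceLeft {a c : Type*} [Fintype a] [Fintype c]
    (M : Matrix (a × c) (a × c) ℂ) : Matrix c c ℂ :=
  fun i j => ∑ k, M (k, i) (k, j)

section Helpers

open scoped Matrix

variable {M : Matrix n n ℂ}

lemma matCfc_of (hM : M.IsHermitian) (f : ℝ → ℝ) :
    matCfc f M = (hM.eigenvectorUnitary : Matrix n n ℂ) *
      Matrix.diagonal (fun i => (f (hM.eigenvalues i) : ℂ)) *
      star (hM.eigenvectorUnitary : Matrix n n ℂ) := dif_pos hM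

lemma matCfc_mul (hM : M.IsHermitian) (f g : ℝ → ℝ) :
    matCfc f M * matCfc g M = matCfc (fun x => f x * g x) M := by
  rw [matCfc_of hM, matCfc_of hM, matCfc_of hM]
  have h : ∀ (a b c d e f : Matrix n n ℂ), (a * b * c) * (d * e * f) = a * (b * (c * d) * e) * f :=
    fun a b c d e f => by simp only [mul_assoc]
  rw [h]
  simp [Matrix.diagonal_mul_diagonal]

lemma matCfc_congr (hM : M.IsHermitian) {f g : ℝ → ℝ}
    (h : ∀ i, f (hM.eigenvalues i) = g (hM.eigenvalues i)) :
    matCfc f M = matCfc g M := by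
  rw [matCfc_of hM, matCfc_of hM]
  congr 2
  ext i j
  simp only [Matrix.diagonal_apply]
  split <;> simp [h]

lemma matCfc_id (hM : M.IsHermitian) : matCfc (fun x => x) M = M := by
  rw [matCfc_of hM]
  exact (hM.spectral_theorem).symm

lemma matCfc_one (hM : M.IsHermitian) : matCfc (fun _ => 1) M = 1 := by
  rw [matCfc_of hM]
  simp [Matrix.diagonal_one]

lemma matCfc_const (hM : M.IsHermitian) (c : ℝ) :
    matCfc (fun _ => c) M = (c : ℂ) • 1 := by
  rw [matCfc_of hM]
  have h : (Matrix.diagonal fun _ : n => ((c : ℝ) : ℂ)) = (c : ℂ) • 1 := by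
    ext i j
    by_cases hij : i = j <;> simp [Matrix.diagonal_apply, Matrix.one_apply, hij]
  rw [h, mul_smul_comm, smul_mul_assoc, mul_one]
  congr 1
  simp [Unitary.coe_mul_star_self hM.eigenvectorUnitary]

lemma matCfc_isHermitian (hM : M.IsHermitian) (f : ℝ → ℝ) : (matCfc f M).IsHermitian := by
  rw [matCfc_of hM]
  apply Matrix.isHermitian_mul_mul_conjTranspose
  ext i j
  simp only [Matrix.conjTranspose_apply, Matrix.diagonal_apply]
  split <;> split <;> simp_all [eq_comm]

lemma matCfc_sub (hM : M.IsHermitian) (f g : ℝ → ℝ) :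
    matCfc (fun x => f x - g x) M = matCfc f M - matCfc g M := by
  simp only [matCfc_of hM]
  rw [← Matrix.sub_mul, ← Matrix.mul_sub]
  congr
  ext i j
  simp [Matrix.diagonal_apply]
  split <;> simp

lemma matCfc_smul (hM : M.IsHermitian) (c : ℝ) (f : ℝ → ℝ) :
    matCfc (fun x => c * f x) M = (c : ℂ) • matCfc f M := by
  simp only [matCfc_of hM]
  have h : (Matrix.diagonal fun i => ((c * f (hM.eigenvalues i) : ℝ) : ℂ))
      = (c : ℂ) • Matrix.diagonal fun i => ((f (hM.eigenvalues i) : ℝ) : ℂ) := by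
    ext i j
    simp only [Matrix.smul_apply, Matrix.diagonal_apply]
    split <;> simp
  rw [h, mul_smul_comm, smul_mul_assoc]

lemma trace_matCfc (hM : M.IsHermitian) (f : ℝ → ℝ) :
    (matCfc f M).trace = ∑ i, (f (hM.eigenvalues i) : ℂ) := by
  rw [matCfc_of hM, Matrix.trace_mul_cycle]
  simp [Matrix.trace_diagonal]

lemma matCfc_posSemidef (hM : M.IsHermitian) {f : ℝ → ℝ}
    (h : ∀ i, 0 ≤ f (hM.eigenvalues i)) : (matCfc f M).PosSemidef := by
  rw [matCfc_of hM, Matrix.star_eq_conjTranspose]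
  have hd : (Matrix.diagonal fun i => ((f (hM.eigenvalues i) : ℝ) : ℂ)).PosSemidef := by
    refine Matrix.posSemidef_diagonal_iff.mpr fun i => ?_
    simpa using h i
  simpa using hd.mul_mul_conjTranspose_same (hM.eigenvectorUnitary : Matrix n n ℂ)

lemma posDef_conj {A B : Matrix n n ℂ} (hA : A.PosDef) (hB : IsUnit B) :
    (B * A * Bᴴ).PosDef := by
  exact hA.mul_mul_conjTranspose_same (Matrix.vecMul_injective_iff_isUnit.mpr hB)

lemma matCfc_posDef (hM : M.IsHermitian) {f : ℝ → ℝ}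
    (h : ∀ i, 0 < f (hM.eigenvalues i)) : (matCfc f M).PosDef := by
  rw [matCfc_of hM]
  rw [Matrix.star_eq_conjTranspose]
  have hd : (Matrix.diagonal fun i => ((f (hM.eigenvalues i) : ℝ) : ℂ)).PosDef :=
    Matrix.posDef_diagonal_iff.mpr fun i => by simpa using h i
  exact posDef_conj hd (Matrix.isUnit_iff_isUnit_det _ |>.mpr
    (by simpa using (Matrix.UnitaryGroup.det_isUnit hM.eigenvectorUnitary)))

lemma posDef_trace_pos [Nonempty n] {A : Matrix n n ℂ} (hA : A.PosDef) :
    0 < A.trace.re := by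
  have h : ∀ i, 0 < (A i i).re := by
    intro i
    have := hA.re_dotProduct_pos (x := Pi.single i 1)
      (by simp only [Function.ne_iff]; exact ⟨i, by simp⟩)
    simpa [dotProduct, Matrix.mulVec, Pi.single_apply] using this
  rw [Matrix.trace]
  simpa [Complex.re_sum] using Finset.sum_pos (fun i _ => h i) Finset.univ_nonempty

lemma posSemidef_trace_re_nonneg {A : Matrix n n ℂ} (hA : A.PosSemidef) :
    0 ≤ A.trace.re := by
  have h : ∀ i, 0 ≤ (A i i).re := by
    intro i
    have := hA.re_dotProduct_nonneg (Pi.single i 1)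
    simpa [dotProduct, Matrix.mulVec, Pi.single_apply] using this
  rw [Matrix.trace]
  simpa [Complex.re_sum] using Finset.sum_nonneg (fun i _ => h i)

end Helpers

/-- For every `q > 1` and all positive definite density matrices `ρ`, `σ`,
the `q`-geometric Rényi divergence satisfies `D̂_q(ρ‖σ) ≤ ‖σ⁻¹ ρ - 1‖`. -/
theorem geomRenyi_le_opNorm {n : Type*} [Fintype n] [DecidableEq n]
    (q : ℝ) (hq : 1 < q) (ρ σ : Matrix n n ℂ)
    (hρ : ρ.PosDef) (hσ : σ.PosDef)
    (hρtr : ρ.trace = 1) (hσtr : σ.trace = 1) :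
    geomRenyi q ρ σ ≤ opNorm (σ⁻¹ * ρ - 1) := by
  classical
  have hne : Nonempty n := by
    rcases isEmpty_or_nonempty n with h | h
    · exfalso; rw [Matrix.trace] at hρtr; simp at hρtr
    · exact h
  have hσ1 : σ.IsHermitian := hσ.1
  have hσev : ∀ i, 0 < hσ1.eigenvalues i := hσ.eigenvalues_pos
  set S := mpow σ (1/2) with hSdef
  set T := mpow σ (-(1/2)) with hTdef
  have hS : S.PosDef := matCfc_posDef hσ1 fun i => Real.rpow_pos_of_pos (hσev i) _
  have hT : T.PosDef := matCfc_posDef hσ1 fun i => Real.rpow_pos_of_pos (hσev i) _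
  have hST : S * T = 1 := by
    rw [hSdef, hTdef, mpow, mpow, matCfc_mul hσ1,
      matCfc_congr hσ1 (g := fun _ => 1)
        (fun i => by rw [← Real.rpow_add (hσev i)]; norm_num),
      matCfc_one hσ1]
  have hTS : T * S = 1 := by
    rw [hSdef, hTdef, mpow, mpow, matCfc_mul hσ1,
      matCfc_congr hσ1 (g := fun _ => 1)
        (fun i => by rw [← Real.rpow_add (hσev i)]; norm_num),
      matCfc_one hσ1]
  have hSS : S * S = σ := by
    rw [hSdef, mpow, matCfc_mul hσ1,
      matCfc_congr hσ1 (g := fun x => x)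
        (fun i => by rw [← Real.rpow_add (hσev i)]; norm_num),
      matCfc_id hσ1]
  set A := T * ρ * T with hAdef
  have hApd : A.PosDef := by
    have := posDef_conj hρ hT.isUnit
    rwa [hT.1.eq] at this
  have hA : A.IsHermitian := hApd.1
  have hAev : ∀ i, 0 < hA.eigenvalues i := hApd.eigenvalues_pos
  obtain ⟨i0, -, hi0⟩ := Finset.exists_max_image Finset.univ hA.eigenvalues
    ⟨Classical.arbitrary n, Finset.mem_univ _⟩
  set k := hA.eigenvalues i0 with hkdef
  have hkpos : 0 < k := hAev i0
  have hSAS : S * A * S = ρ := by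
    rw [hAdef]
    calc S * (T * ρ * T) * S = (S * T) * ρ * (T * S) := by noncomm_ring
    _ = ρ := by rw [hST, hTS, one_mul, mul_one]
  -- k ≥ 1
  have hconst : matCfc (fun x => k - x) A = (k : ℂ) • 1 - A := by
    rw [matCfc_sub hA (fun _ => k) (fun x => x), matCfc_const hA, matCfc_id hA]
  have hk1 : 1 ≤ k := by
    have hpsd : (S * ((k : ℂ) • 1 - A) * S).PosSemidef := by
      rw [← hconst]
      have := (matCfc_posSemidef hA (f := fun x => k - x)
        (fun i => sub_nonneg.mpr (hi0 i (Finset.mem_univ i)))).mul_mul_conjTranspose_same S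
      rwa [hS.1.eq] at this
    have h0 := posSemidef_trace_re_nonneg hpsd
    have hexp : S * ((k : ℂ) • 1 - A) * S = (k : ℂ) • (S * S) - S * A * S := by
      rw [Matrix.mul_sub, Matrix.sub_mul, mul_smul_comm, smul_mul_assoc, mul_one]
    rw [hexp, hSS, hSAS, Matrix.trace_sub, Matrix.trace_smul, hσtr, hρtr] at h0
    simpa using h0
  -- main trace bound
  set P := mpow A q with hPdef
  set t : ℝ := (Matrix.trace (S * P * S)).re with htdef
  have hgf : matCfc (fun x => k ^ (q - 1) * x - x ^ q) A = ((k ^ (q - 1) : ℝ) : ℂ) • A - P := by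
    rw [matCfc_sub hA (fun x => k ^ (q - 1) * x) (fun x => x ^ q), matCfc_smul hA,
      matCfc_id hA, hPdef, mpow]
  have hg0 : ∀ i, 0 ≤ k ^ (q - 1) * hA.eigenvalues i - hA.eigenvalues i ^ q := by
    intro i
    have h1 : hA.eigenvalues i ^ q = hA.eigenvalues i ^ (q - 1) * hA.eigenvalues i := by
      rw [← Real.rpow_add_one (hAev i).ne']
      norm_num
    rw [h1, sub_nonneg]
    apply mul_le_mul_of_nonneg_right _ (hAev i).le
    exact Real.rpow_le_rpow (hAev i).le (hi0 i (Finset.mem_univ i)) (by linarith)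
  have ht_le : t ≤ k ^ (q - 1) := by
    have hpsd : (S * (((k ^ (q - 1) : ℝ) : ℂ) • A - P) * S).PosSemidef := by
      rw [← hgf]
      have := (matCfc_posSemidef hA (f := fun x => k ^ (q - 1) * x - x ^ q) hg0).mul_mul_conjTranspose_same S
      rwa [hS.1.eq] at this
    have h0 := posSemidef_trace_re_nonneg hpsd
    have hexp : S * (((k ^ (q - 1) : ℝ) : ℂ) • A - P) * S
        = ((k ^ (q - 1) : ℝ) : ℂ) • (S * A * S) - S * P * S := by
      rw [Matrix.mul_sub, Matrix.sub_mul, mul_smul_comm, smul_mul_assoc]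
    rw [hexp, hSAS, Matrix.trace_sub, Matrix.trace_smul, hρtr] at h0
    simp only [smul_eq_mul, mul_one, Complex.sub_re, Complex.ofReal_re] at h0
    rw [htdef]
    linarith
  have ht_pos : 0 < t := by
    have hP : P.PosDef := matCfc_posDef hA fun i => Real.rpow_pos_of_pos (hAev i) _
    have := posDef_conj hP hS.isUnit
    rw [hS.1.eq] at this
    exact posDef_trace_pos this
  -- reduce goal
  have hgr : geomRenyi q ρ σ = (q - 1)⁻¹ * Real.log t := rfl
  have hlog : (q - 1)⁻¹ * Real.log t ≤ Real.log k := by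
    have h1 : Real.log t ≤ Real.log (k ^ (q - 1)) :=
      (Real.log_le_log_iff ht_pos (Real.rpow_pos_of_pos hkpos _)).mpr ht_le
    rw [Real.log_rpow hkpos] at h1
    have hq1 : (0:ℝ) < q - 1 := by linarith
    calc (q - 1)⁻¹ * Real.log t ≤ (q - 1)⁻¹ * ((q - 1) * Real.log k) :=
          mul_le_mul_of_nonneg_left h1 (by positivity)
    _ = Real.log k := by field_simp
  have hlogk : Real.log k ≤ k - 1 := Real.log_le_sub_one_of_pos hkpos
  -- spectrum bound
  have hTT : σ⁻¹ = T * T := by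
    apply Matrix.inv_eq_left_inv
    calc T * T * σ = T * T * (S * S) := by rw [hSS]
    _ = T * (T * S) * S := by noncomm_ring
    _ = 1 := by rw [hTS, mul_one, hTS]
  have hsim : T * (A - 1) * S = σ⁻¹ * ρ - 1 := by
    rw [hAdef, hTT]
    calc T * (T * ρ * T - 1) * S = (T * T) * ρ * (T * S) - T * S := by noncomm_ring
    _ = T * T * ρ - 1 := by rw [hTS, mul_one]
  have hk_spec : (k : ℂ) ∈ spectrum ℂ A := by
    have h1 := hA.eigenvalues_mem_spectrum_real i0
    rw [← spectrum.preimage_algebraMap (R := ℝ) ℂ] at h1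
    exact h1
  have hk_spec2 : (k : ℂ) - 1 ∈ spectrum ℂ (A - 1) := by
    have h1 := spectrum.sub_singleton_eq (R := ℂ) A 1
    rw [map_one] at h1
    rw [← h1]
    exact Set.sub_mem_sub hk_spec rfl
  have hk_spec3 : (k : ℂ) - 1 ∈ spectrum ℂ (σ⁻¹ * ρ - 1) := by
    rw [← hsim]
    let u : (Matrix n n ℂ)ˣ := ⟨T, S, hTS, hST⟩
    have hu : spectrum ℂ ((u : Matrix n n ℂ) * (A - 1) * ((u⁻¹ : (Matrix n n ℂ)ˣ) : Matrix n n ℂ))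
        = spectrum ℂ (A - 1) := spectrum.units_conjugate
    simpa [u] using hu ▸ hk_spec2
  have hnorm : k - 1 ≤ opNorm (σ⁻¹ * ρ - 1) := by
    have e : spectrum ℂ (Matrix.toEuclideanCLM (𝕜 := ℂ) (n := n) (σ⁻¹ * ρ - 1)) = spectrum ℂ (σ⁻¹ * ρ - 1) :=
      AlgEquiv.spectrum_eq _ (σ⁻¹ * ρ - 1)
    have h2 : ‖(k : ℂ) - 1‖ ≤ opNorm (σ⁻¹ * ρ - 1) :=
      spectrum.norm_le_norm_of_mem (e ▸ hk_spec3)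
    have h3 : ‖(k : ℂ) - 1‖ = k - 1 := by
      rw [show (k : ℂ) - 1 = ((k - 1 : ℝ) : ℂ) by push_cast; ring]
      rw [Complex.norm_real]
      exact abs_of_nonneg (by linarith)
    rw [h3] at h2
    exact h2
  rw [hgr]
  calc (q - 1)⁻¹ * Real.log t ≤ Real.log k := hlog
  _ ≤ k - 1 := hlogk
  _ ≤ opNorm (σ⁻¹ * ρ - 1) := hnorm


end QIT
end

section
/- Let d ≥ 2, let M ⊂ ℤ be a finite interval, let H be a self-adjoint operator on ℋ_M, and let 𝒢 > 1. Write I_n := M ∩ [1−n, n] and, for Λ' ⊆ M, let ‖Q‖_{Λ'} denote the operator-norm distance from Q ∈ 𝔄_M to the subalgebra of operators supported in Λ'. Assume that for every n ≥ 1, every s ∈ ℂ with |s| ≤ 1, and every operator R ∈ 𝔄_M supported in I_n, one has ‖e^{isH} R e^{−isH}‖ ≤ 𝒢^{2n} ‖R‖. Then for every Q ∈ 𝔄_M and every s ∈ ℂ with |s| ≤ 1: ‖e^{isH} Q e^{−isH}‖ ≤ 𝒢² ‖Q‖ + (1 + 𝒢²) Σ_{n ≥ 1} 𝒢^{2n}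 ‖Q‖_{I_n} (the sum is finite since ‖Q‖_{I_n} = 0 once I_n = M). -/
open Matrix
open scoped ComplexOrder

namespace SpinChain

variable (d : ℕ)

/-- Configurations of the spins in the finite region `Λ ⊂ ℤ`. -/
abbrev Cfg (Λ : Finset ℤ) : Type := (x : Λ) → Fin d

/-- The algebra of observables on the region `Λ`, i.e. linear operators on
`ℋ_Λ = ⊗_{x ∈ Λ} ℂ^d`. -/
abbrev Obs (Λ : Finset ℤ) : Type := Matrix (Cfg d Λ) (Cfg d Λ) ℂ

/-- Operator norm of an observable. -/
noncomputable def opNorm {Λ : Finset ℤ} (M : Obs d Λ) : ℝ :=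
  ‖Matrix.toEuclideanCLM (𝕜 := ℂ) M‖

/-- Trace norm `‖M‖₁ = Tr ((M†M)^{1/2})` of an observable. -/
noncomputable def traceNorm {Λ : Finset ℤ} (M : Obs d Λ) : ℝ :=
  (((Matrix.posSemidef_conjTranspose_mul_self M).1.eigenvectorUnitary.1 *
      Matrix.diagonal (((↑) : ℝ → ℂ) ∘ Real.sqrt ∘ (Matrix.posSemidef_conjTranspose_mul_self M).1.eigenvalues) *
      (star (Matrix.posSemidef_conjTranspose_mul_self M).1.eigenvectorUnitary : Obs d Λ)).trace).re

/-- Restriction of a configuration to a subregion. -/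
def restrict {Λ' Λ : Finset ℤ} (h : Λ' ⊆ Λ) (f : Cfg d Λ) : Cfg d Λ' :=
  fun x => f ⟨x.1, h x.2⟩

/-- The canonical embedding `𝔄_{Λ'} → 𝔄_Λ`, `R ↦ R ⊗ 1_{Λ ∖ Λ'}`. -/
def embed {Λ' Λ : Finset ℤ} (h : Λ' ⊆ Λ) (R : Obs d Λ') : Obs d Λ :=
  fun f g =>
    if ∀ x : Λ, x.1 ∉ Λ' → f x = g x then R (restrict d h f) (restrict d h g) else 0

/-- An observable `Q ∈ 𝔄_Λ` is supported in `Λ'` if it is the embedding of some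
observable on `Λ'`. -/
def SupportedIn {Λ : Finset ℤ} (Λ' : Finset ℤ) (Q : Obs d Λ) : Prop :=
  ∃ (h : Λ' ⊆ Λ) (R : Obs d Λ'), Q = embed d h R

/-- Operator-norm distance from `Q ∈ 𝔄_Λ` to the subalgebra of observables
supported in `Λ'`. -/
noncomputable def distSupp {Λ : Finset ℤ} (Λ' : Finset ℤ) (h : Λ' ⊆ Λ) (Q : Obs d Λ) : ℝ :=
  sInf {x : ℝ | ∃ R : Obs d Λ', x = opNorm d (Q - embed d h R)}

/-- The extended partial trace `tr_{Λ'} : 𝔄_Λ → 𝔄_Λ`, determined by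
`tr_{Λ'}(R ⊗ S) = Tr(R) (1_{Λ'} ⊗ S)`. -/
noncomputable def ptr {Λ' Λ : Finset ℤ} (h : Λ' ⊆ Λ) (Q : Obs d Λ) : Obs d Λ :=
  fun f g =>
    if restrict d h f = restrict d h g then
      ∑ c : Cfg d Λ',
        Q (fun x => if hx : x.1 ∈ Λ' then c ⟨x.1, hx⟩ else f x)
          (fun x => if hx : x.1 ∈ Λ' then c ⟨x.1, hx⟩ else g x)
    else 0

/-- The (possibly complex time) Heisenberg evolution `Q ↦ e^{isH} Q e^{-isH}`. -/
noncomputable def timeEvol {Λ : Finset ℤ} (H : Obs d Λ) (s : ℂ) (Q : Obs d Λ) : Obs d Λ :=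
  NormedSpace.exp ((Complex.I * s) • H) * Q * NormedSpace.exp (-((Complex.I * s) • H))

/-- A local interaction of range `r` and strength `J` on the chain `ℤ`:
a family of self-adjoint observables `Φ_X ∈ 𝔄_X` with `‖Φ_X‖ ≤ J`, vanishing
whenever `diam X > r`. -/
structure Interaction (r : ℕ) (J : ℝ) where
  φ : (X : Finset ℤ) → Obs d X
  herm : ∀ X, (φ X).IsHermitian
  strength : ∀ X, opNorm d (φ X) ≤ J
  finiteRange : ∀ X : Finset ℤ, ∀ x ∈ X, ∀ y ∈ X, (r : ℤ) < |x - y| → φ X = 0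

variable {d}

/-- The local Hamiltonian `H_Λ = ∑_{X ⊆ Λ} Φ_X`, as an observable on the ambient
region `I ⊇ Λ`. -/
noncomputable def ham {r : ℕ} {J : ℝ} (Φ : Interaction d r J) {I : Finset ℤ}
    (Λ : Finset ℤ) (h : Λ ⊆ I) : Obs d I :=
  ∑ X ∈ Λ.powerset.attach, embed d ((Finset.mem_powerset.mp X.2).trans h) (Φ.φ X.1)

/-- The Gibbs state `ρ^Λ = e^{-H_Λ} / Tr(e^{-H_Λ}) ∈ 𝔄_Λ` (at inverse temperature `β = 1`,
absorbed in the interaction). -/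
noncomputable def gibbs {r : ℕ} {J : ℝ} (Φ : Interaction d r J) (Λ : Finset ℤ) : Obs d Λ :=
  (Matrix.trace (NormedSpace.exp (-(ham Φ Λ (le_refl Λ)))))⁻¹ •
    NormedSpace.exp (-(ham Φ Λ (le_refl Λ)))

/-- The expansional `E_{X,Y} = e^{-H_{X∪Y}} e^{H_X + H_Y}`, as an observable on the
ambient region `I`. -/
noncomputable def expans {r : ℕ} {J : ℝ} (Φ : Interaction d r J) {I : Finset ℤ}
    (X Y : Finset ℤ) (hX : X ⊆ I) (hY : Y ⊆ I) : Obs d I :=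
  NormedSpace.exp (-(ham Φ (X ∪ Y) (Finset.union_subset hX hY))) *
    NormedSpace.exp (ham Φ X hX + ham Φ Y hY)

/-- `tr_Λ(ρ^Λ Q)`, where `ρ^Λ` is the Gibbs state on `Λ` embedded in `𝔄_I`. -/
noncomputable def trGibbs {r : ℕ} {J : ℝ} (Φ : Interaction d r J) {I : Finset ℤ}
    {Λ : Finset ℤ} (h : Λ ⊆ I) (Q : Obs d I) : Obs d I :=
  ptr d h (embed d h (gibbs Φ Λ) * Q)

/-- The finite-volume Gibbs expectation value `ψ_Λ(Q) = Tr(ρ^Λ Q)`. -/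
noncomputable def expec {r : ℕ} {J : ℝ} (Φ : Interaction d r J) (Λ : Finset ℤ)
    (Q : Obs d Λ) : ℂ :=
  Matrix.trace (gibbs Φ Λ * Q)

/-- The interaction `Φ` satisfies *uniform clustering* with decay function `ε`:
for every finite interval `I = ABC` split into three adjacent subintervals with
`|B| ≥ ℓ`, the covariance correlation of the Gibbs state `ρ^I` between `A` and `C`
is at most `ε ℓ`. -/
def UniformClustering {r : ℕ} {J : ℝ} (Φ : Interaction d r J) (ε : ℕ → ℝ) : Prop :=
  ∀ (a b c e : ℤ) (hab : a ≤ b) (hbc : b ≤ c) (hce : c ≤ e) (ℓ : ℕ), (ℓ : ℤ) ≤ c - b →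
    ∀ (QA : Obs d (Finset.Ico a b)) (QC : Obs d (Finset.Ico c e)),
      opNorm d QA ≤ 1 → opNorm d QC ≤ 1 →
      ‖(expec Φ (Finset.Ico a e)
            (embed d (Finset.Ico_subset_Ico le_rfl (hbc.trans hce)) QA *
              embed d (Finset.Ico_subset_Ico (hab.trans hbc) le_rfl) QC) -
          expec Φ (Finset.Ico a e)
              (embed d (Finset.Ico_subset_Ico le_rfl (hbc.trans hce)) QA) *
            expec Φ (Finset.Ico a e)
              (embed d (Finset.Ico_subset_Ico (hab.trans hbc) le_rfl) QC))‖ ≤ ε ℓ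

section Helpers

variable {d : ℕ}

lemma opNorm_nonneg' {Λ : Finset ℤ} (M : Obs d Λ) : 0 ≤ opNorm d M := norm_nonneg _

lemma opNorm_zero' {Λ : Finset ℤ} : opNorm d (0 : Obs d Λ) = 0 := by
  simp only [opNorm, map_zero, norm_zero]

lemma opNorm_add_le' {Λ : Finset ℤ} (A B : Obs d Λ) :
    opNorm d (A + B) ≤ opNorm d A + opNorm d B := by
  simp only [opNorm, map_add]; exact norm_add_le _ _

lemma opNorm_sub_le' {Λ : Finset ℤ} (A B : Obs d Λ) :
    opNorm d (A - B) ≤ opNorm d A + opNorm d B := by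
  simp only [opNorm, map_sub]; exact norm_sub_le _ _

lemma opNorm_sum_le' {Λ : Finset ℤ} {ι : Type*} (t : Finset ι) (f : ι → Obs d Λ) :
    opNorm d (∑ i ∈ t, f i) ≤ ∑ i ∈ t, opNorm d (f i) := by
  simp only [opNorm, map_sum]; exact norm_sum_le _ _

lemma timeEvol_add' {Λ : Finset ℤ} (H : Obs d Λ) (s : ℂ) (A B : Obs d Λ) :
    timeEvol d H s (A + B) = timeEvol d H s A + timeEvol d H s B := by
  simp [timeEvol, mul_add, add_mul]

lemma timeEvol_sum' {Λ : Finset ℤ} (H : Obs d Λ) (s : ℂ) {ι : Type*} (t : Finset ι)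
    (f : ι → Obs d Λ) :
    timeEvol d H s (∑ i ∈ t, f i) = ∑ i ∈ t, timeEvol d H s (f i) := by
  simp [timeEvol, Finset.mul_sum, Finset.sum_mul]

lemma embed_refl' {Λ : Finset ℤ} (h : Λ ⊆ Λ) (R : Obs d Λ) : embed d h R = R := by
  funext f g
  simp only [embed]
  rw [if_pos]
  · rfl
  · intro x hx; exact absurd x.2 hx

lemma embed_sub' {Λ' Λ : Finset ℤ} (h : Λ' ⊆ Λ) (R₁ R₂ : Obs d Λ') :
    embed d h (R₁ - R₂) = embed d h R₁ - embed d h R₂ := by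
  funext f g
  simp only [embed, Matrix.sub_apply]
  split <;> simp

lemma embed_comp' {Λ'' Λ' Λ : Finset ℤ} (h1 : Λ'' ⊆ Λ') (h2 : Λ' ⊆ Λ) (R : Obs d Λ'') :
    embed d h2 (embed d h1 R) = embed d (h1.trans h2) R := by
  funext f g
  simp only [embed]
  by_cases c1 : ∀ x : Λ, x.1 ∉ Λ' → f x = g x
  · rw [if_pos c1]
    by_cases c2 : ∀ x : Λ', x.1 ∉ Λ'' → restrict d h2 f x = restrict d h2 g x
    · have c : ∀ x : Λ, x.1 ∉ Λ'' → f x = g x := by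
        intro x hx
        by_cases hm : x.1 ∈ Λ'
        · exact c2 ⟨x.1, hm⟩ hx
        · exact c1 x hm
      rw [if_pos c2, if_pos c]
      rfl
    · have c : ¬ ∀ x : Λ, x.1 ∉ Λ'' → f x = g x := by
        intro c
        exact c2 fun x hx => c ⟨x.1, h2 x.2⟩ hx
      rw [if_neg c2, if_neg c]
  · have c : ¬ ∀ x : Λ, x.1 ∉ Λ'' → f x = g x := by
      intro c
      exact c1 fun x hx => c x fun hxx => hx (h1 hxx)
    rw [if_neg c1, if_neg c]

lemma supportedIn_embed' {Λ' Λ : Finset ℤ} (h : Λ' ⊆ Λ) (R : Obs d Λ') :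
    SupportedIn d Λ' (embed d h R) := ⟨h, R, rfl⟩

lemma supportedIn_mono' {Λ'' Λ' Λ : Finset ℤ} (hs : Λ'' ⊆ Λ') (h' : Λ' ⊆ Λ)
    {Q : Obs d Λ} (hQ : SupportedIn d Λ'' Q) : SupportedIn d Λ' Q := by
  obtain ⟨h, R, rfl⟩ := hQ
  exact ⟨h', embed d hs R, (embed_comp' hs h' R).symm⟩

lemma supportedIn_sub' {Λ' Λ : Finset ℤ} {Q₁ Q₂ : Obs d Λ}
    (h₁ : SupportedIn d Λ' Q₁) (h₂ : SupportedIn d Λ' Q₂) :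
    SupportedIn d Λ' (Q₁ - Q₂) := by
  obtain ⟨h, R₁, rfl⟩ := h₁
  obtain ⟨h', R₂, rfl⟩ := h₂
  exact ⟨h, R₁ - R₂, by rw [embed_sub']⟩

lemma supportedIn_of_eq' {Λ' Λ : Finset ℤ} (e : Λ' = Λ) (h : Λ' ⊆ Λ) (Q : Obs d Λ) :
    SupportedIn d Λ' Q := by
  subst e
  exact ⟨h, Q, (embed_refl' h Q).symm⟩

lemma distSupp_nonneg' {Λ' Λ : Finset ℤ} (h : Λ' ⊆ Λ) (Q : Obs d Λ) :
    0 ≤ distSupp d Λ' h Q :=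
  Real.sInf_nonneg (by rintro x ⟨R, rfl⟩; exact opNorm_nonneg' _)

lemma distSupp_congr' {Λ Λ₁ Λ₂ : Finset ℤ} (e : Λ₁ = Λ₂) (h₁ : Λ₁ ⊆ Λ) (h₂ : Λ₂ ⊆ Λ)
    (Q : Obs d Λ) : distSupp d Λ₁ h₁ Q = distSupp d Λ₂ h₂ Q := by
  subst e; rfl

lemma distSupp_eq_zero' {Λ' Λ : Finset ℤ} (e : Λ' = Λ) (h : Λ' ⊆ Λ) (Q : Obs d Λ) :
    distSupp d Λ' h Q = 0 := by
  subst e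
  refine le_antisymm ?_ (distSupp_nonneg' h Q)
  have : opNorm d (Q - embed d h Q) ∈ {x : ℝ | ∃ R : Obs d Λ', x = opNorm d (Q - embed d h R)} :=
    ⟨Q, rfl⟩
  calc sInf _ ≤ opNorm d (Q - embed d h Q) :=
        csInf_le ⟨0, by rintro x ⟨R, rfl⟩; exact opNorm_nonneg' _⟩ this
    _ = 0 := by rw [embed_refl', sub_self, opNorm_zero']

lemma distSupp_exists_approx' {Λ' Λ : Finset ℤ} (h : Λ' ⊆ Λ) (Q : Obs d Λ) {δ : ℝ}
    (hδ : 0 < δ) : ∃ S : Obs d Λ, SupportedIn d Λ' S ∧ opNorm d (Q - S) ≤ distSupp d Λ' h Q + δ := by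
  obtain ⟨x, ⟨R, rfl⟩, hx⟩ := Real.lt_sInf_add_pos
    (⟨_, ⟨(0 : Obs d Λ'), rfl⟩⟩ : Set.Nonempty {x : ℝ | ∃ R : Obs d Λ', x = opNorm d (Q - embed d h R)}) hδ
  exact ⟨embed d h R, supportedIn_embed' h R, hx.le⟩

end Helpers
/-- Lemma `localityDynamics`. If the complex-time evolution generated by a
self-adjoint `H` on a finite interval `M = [a,b)` satisfies `‖e^{isH} R e^{-isH}‖ ≤ 𝒢^{2n} ‖R‖`
for observables `R` supported in `I_n = M ∩ [1-n, n]`, then for every observable `Q` and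
`|s| ≤ 1`:
`‖e^{isH} Q e^{-isH}‖ ≤ 𝒢² ‖Q‖ + (1 + 𝒢²) ∑_{n ≥ 1} 𝒢^{2n} ‖Q‖_{I_n}`. -/
theorem locality_of_dynamics (d : ℕ) (hd : 2 ≤ d) (a b : ℤ) (G : ℝ) (hG : 1 < G)
    (H : Obs d (Finset.Ico a b)) (hH : H.IsHermitian)
    (hyp : ∀ n : ℕ, 1 ≤ n → ∀ s : ℂ, ‖s‖ ≤ 1 →
      ∀ R : Obs d (Finset.Ico a b),
        SupportedIn d (Finset.Ico a b ∩ Finset.Icc (1 - (n : ℤ)) (n : ℤ)) R →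
        opNorm d (timeEvol d H s R) ≤ G ^ (2 * n) * opNorm d R)
    (Q : Obs d (Finset.Ico a b)) (s : ℂ) (hs : ‖s‖ ≤ 1) :
    opNorm d (timeEvol d H s Q) ≤
      G ^ 2 * opNorm d Q +
        (1 + G ^ 2) *
          ∑' n : ℕ,
            G ^ (2 * (n + 1)) *
              distSupp d (Finset.Ico a b ∩ Finset.Icc (1 - ((n : ℤ) + 1)) ((n : ℤ) + 1))
                Finset.inter_subset_left Q := by
  classical
  have hG0 : (0:ℝ) < G := lt_trans one_pos hG
  set In : ℕ → Finset ℤ := fun n => Finset.Ico a b ∩ Finset.Icc (1 - (n:ℤ)) (n:ℤ) with hIn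
  set D : ℕ → ℝ := fun n => distSupp d (In (n+1)) Finset.inter_subset_left Q with hDdef
  have hDcongr : ∀ n : ℕ,
      distSupp d (Finset.Ico a b ∩ Finset.Icc (1 - ((n : ℤ) + 1)) ((n : ℤ) + 1))
        Finset.inter_subset_left Q = D n := by
    intro n
    exact distSupp_congr' (by push_cast; rfl) _ _ Q
  simp only [hDcongr]
  -- choice of N
  set N : ℕ := (max (1 - a) b).toNat with hNdef
  have hN : ∀ n : ℕ, N ≤ n → In (n+1) = Finset.Ico a b := by
    intro n hn
    apply Finset.inter_eq_left.mpr
    intro x hx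
    simp only [Finset.mem_Ico] at hx
    simp only [Finset.mem_Icc]
    have h1 : (1 - a : ℤ) ≤ (N:ℤ) := le_trans (le_max_left _ _) (Int.self_le_toNat _)
    have h2 : (b : ℤ) ≤ N := le_trans (le_max_right _ _) (Int.self_le_toNat _)
    have hn' : (N:ℤ) ≤ (n:ℤ) := by exact_mod_cast hn
    push_cast
    omega
  have hD0 : ∀ n : ℕ, N ≤ n → D n = 0 := fun n hn =>
    distSupp_eq_zero' (hN n hn) _ Q
  have htsum : ∑' n : ℕ, G ^ (2 * (n + 1)) * D n
      = ∑ n ∈ Finset.range N, G ^ (2 * (n + 1)) * D n := by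
    apply tsum_eq_sum
    intro n hn
    rw [hD0 n (le_of_not_gt fun h => hn (Finset.mem_range.mpr h)), mul_zero]
  rw [htsum]
  -- the key estimate with error δ
  have key : ∀ δ : ℝ, 0 < δ →
      opNorm d (timeEvol d H s Q) ≤
        G ^ 2 * opNorm d Q + (1 + G ^ 2) * ∑ n ∈ Finset.range N, G ^ (2 * (n + 1)) * D n +
          δ * (G ^ 2 + ∑ j ∈ Finset.range N, 2 * G ^ (2 * (j + 2))) := by
    intro δ hδ
    -- approximants
    have approx : ∀ n : ℕ, ∃ S : Obs d (Finset.Ico a b),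
        SupportedIn d (In (n+1)) S ∧ opNorm d (Q - S) ≤ D n + δ :=
      fun n => distSupp_exists_approx' Finset.inter_subset_left Q hδ
    choose S0 hS0a hS0b using approx
    set S : ℕ → Obs d (Finset.Ico a b) := fun n => if N ≤ n then Q else S0 n with hSdef
    have hSQ : ∀ n : ℕ, N ≤ n → S n = Q := by intro n hn; simp [hSdef, hn]
    have hSsupp : ∀ n : ℕ, SupportedIn d (In (n+1)) (S n) := by
      intro n
      by_cases hn : N ≤ n
      · rw [hSQ n hn]; exact supportedIn_of_eq' (hN n hn) Finset.inter_subset_left Q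
      · simp only [hSdef, if_neg hn]; exact hS0a n
    have hSnorm : ∀ n : ℕ, opNorm d (Q - S n) ≤ D n + δ := by
      intro n
      by_cases hn : N ≤ n
      · rw [hSQ n hn, sub_self, opNorm_zero']
        have hD : 0 ≤ D n := distSupp_nonneg' Finset.inter_subset_left Q
        linarith
      · simp only [hSdef, if_neg hn]; exact hS0b n
    -- telescoping
    have htel : timeEvol d H s Q =
        timeEvol d H s (S 0) + ∑ j ∈ Finset.range N, timeEvol d H s (S (j+1) - S j) := by
      have e : S 0 + ∑ j ∈ Finset.range N, (S (j+1) - S j) = Q := by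
        rw [Finset.sum_range_sub (fun i => S i), hSQ N le_rfl]
        abel
      rw [← timeEvol_sum', ← timeEvol_add', e]
    -- bound on the first term
    have h0 : opNorm d (timeEvol d H s (S 0)) ≤ G ^ (2 * 1) * opNorm d (S 0) :=
      hyp 1 le_rfl s hs (S 0) (hSsupp 0)
    have hS0norm : opNorm d (S 0) ≤ opNorm d Q + (D 0 + δ) :=
      calc opNorm d (S 0) = opNorm d (Q - (Q - S 0)) := by rw [sub_sub_cancel]
        _ ≤ opNorm d Q + opNorm d (Q - S 0) := opNorm_sub_le' _ _
        _ ≤ opNorm d Q + (D 0 + δ) := add_le_add le_rfl (hSnorm 0)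
    -- bound on the difference terms
    have hdiff : ∀ j : ℕ, opNorm d (timeEvol d H s (S (j+1) - S j)) ≤
        G ^ (2 * (j + 2)) * (D j + D (j+1) + 2 * δ) := by
      intro j
      have hmono : In (j+1) ⊆ In (j+2) := by
        apply Finset.inter_subset_inter (subset_refl _)
        apply Finset.Icc_subset_Icc <;> push_cast <;> omega
      have hsupp : SupportedIn d (In (j+2)) (S (j+1) - S j) :=
        supportedIn_sub' (hSsupp (j+1)) (supportedIn_mono' hmono Finset.inter_subset_left (hSsupp j))
      refine (hyp (j+2) (by omega) s hs _ hsupp).trans ?_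
      have hnorm : opNorm d (S (j+1) - S j) ≤ D j + D (j+1) + 2 * δ := by
        have e : S (j+1) - S j = (Q - S j) - (Q - S (j+1)) := by abel
        rw [e]
        have := hSnorm j
        have := hSnorm (j+1)
        have htri := opNorm_sub_le' (Q - S j) (Q - S (j+1))
        linarith
      exact mul_le_mul_of_nonneg_left hnorm (pow_nonneg hG0.le _)
    -- sum splitting
    have hsplit : ∑ j ∈ Finset.range N, G ^ (2 * (j + 2)) * (D j + D (j + 1) + 2 * δ)
        = G ^ 2 * (∑ j ∈ Finset.range N, G ^ (2 * (j + 1)) * D j)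
          + (∑ j ∈ Finset.range N, G ^ (2 * (j + 1 + 1)) * D (j + 1))
          + δ * (∑ j ∈ Finset.range N, 2 * G ^ (2 * (j + 2))) := by
      rw [Finset.mul_sum, Finset.mul_sum, ← Finset.sum_add_distrib, ← Finset.sum_add_distrib]
      exact Finset.sum_congr rfl fun j _ => by ring
    have hshift : (∑ j ∈ Finset.range N, G ^ (2 * (j + 1 + 1)) * D (j + 1))
          + G ^ (2 * (0 + 1)) * D 0
        = (∑ n ∈ Finset.range N, G ^ (2 * (n + 1)) * D n) + G ^ (2 * (N + 1)) * D N := by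
      rw [← Finset.sum_range_succ' (fun n => G ^ (2 * (n + 1)) * D n) N,
        Finset.sum_range_succ]
    calc opNorm d (timeEvol d H s Q)
        = opNorm d (timeEvol d H s (S 0) + ∑ j ∈ Finset.range N, timeEvol d H s (S (j+1) - S j)) := by
          rw [htel]
      _ ≤ opNorm d (timeEvol d H s (S 0)) +
            ∑ j ∈ Finset.range N, opNorm d (timeEvol d H s (S (j+1) - S j)) :=
          le_trans (opNorm_add_le' _ _) (add_le_add le_rfl (opNorm_sum_le' _ _))
      _ ≤ G ^ (2 * 1) * opNorm d (S 0) +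
            ∑ j ∈ Finset.range N, G ^ (2 * (j + 2)) * (D j + D (j+1) + 2 * δ) :=
          add_le_add h0 (Finset.sum_le_sum fun j _ => hdiff j)
      _ ≤ G ^ (2 * 1) * (opNorm d Q + (D 0 + δ)) +
            ∑ j ∈ Finset.range N, G ^ (2 * (j + 2)) * (D j + D (j+1) + 2 * δ) :=
          add_le_add (mul_le_mul_of_nonneg_left hS0norm (pow_nonneg hG0.le _)) le_rfl
      _ = G ^ 2 * opNorm d Q + (1 + G ^ 2) * ∑ n ∈ Finset.range N, G ^ (2 * (n + 1)) * D n +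
            δ * (G ^ 2 + ∑ j ∈ Finset.range N, 2 * G ^ (2 * (j + 2))) +
            G ^ (2 * (N + 1)) * D N := by
          rw [hsplit]; linear_combination hshift
      _ = G ^ 2 * opNorm d Q + (1 + G ^ 2) * ∑ n ∈ Finset.range N, G ^ (2 * (n + 1)) * D n +
            δ * (G ^ 2 + ∑ j ∈ Finset.range N, 2 * G ^ (2 * (j + 2))) := by
          rw [hD0 N le_rfl]; ring
  -- conclude by letting δ → 0
  set C : ℝ := G ^ 2 + ∑ j ∈ Finset.range N, 2 * G ^ (2 * (j + 2)) with hCdef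
  have hCpos : 0 < C :=
    add_pos_of_pos_of_nonneg (pow_pos hG0 2)
      (Finset.sum_nonneg fun j _ => mul_nonneg (by norm_num) (pow_nonneg hG0.le _))
  apply le_of_forall_pos_le_add
  intro ε hε
  calc opNorm d (timeEvol d H s Q)
      ≤ G ^ 2 * opNorm d Q + (1 + G ^ 2) * ∑ n ∈ Finset.range N, G ^ (2 * (n + 1)) * D n +
        (ε / C) * C := key (ε / C) (div_pos hε hCpos)
    _ = G ^ 2 * opNorm d Q + (1 + G ^ 2) * ∑ n ∈ Finset.range N, G ^ (2 * (n + 1)) * D n + ε := by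
        rw [div_mul_cancel₀ _ hCpos.ne']

end SpinChain
end
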